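/- Let I be an instance in which every good is positively valued by at least one agent, and let I⁺ be obtained by adding one new agent d and two new goods x, y, where d values x and y at 1 each and all other goods at 0, and every original agent values x and y at 0. Then I admits a complete allocation that is both EFX and Pareto-optimal if and only if I⁺ does; moreover, in any EFX and PO allocation for I⁺, agent d receives exactly {x, y}. -/

import Mathlib

/-- An allocation is complete if every good belongs to exactly one bundle. -/
def IsCompleteAlloc {N : Type*} {m : ℕ} (A : N → Finset (Fin m)) : Prop :=
  ∀ g : Fin m, ∃! i : N, g ∈ A i

/-- EFX: envy is eliminated after removing any positively-valued good. -/
def IsEFX {N : Type*} {m : ℕ} (v : N → Fin m → ℝ) (A : N → Finset (Fin m)) : Prop :=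
  ∀ i j : N, A j ≠ ∅ → ∀ g ∈ A j, 0 < v i g →
    ∑ h ∈ (A j).erase g, v i h ≤ ∑ h ∈ A i, v i h

/-- Pareto optimality: no complete allocation weakly improves everyone and strictly
improves someone. -/
def IsPO {N : Type*} {m : ℕ} (v : N → Fin m → ℝ) (A : N → Finset (Fin m)) : Prop :=
  ¬ ∃ B : N → Finset (Fin m), IsCompleteAlloc B ∧
      (∀ i, ∑ h ∈ A i, v i h ≤ ∑ h ∈ B i, v i h) ∧
      (∃ i, ∑ h ∈ A i, v i h < ∑ h ∈ B i, v i h)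

namespace AddPairAux

def embm (m : ℕ) : Fin m ↪ Fin (m + 2) :=
  ⟨fun g => ⟨g.val, by omega⟩, fun a b h => by simpa [Fin.ext_iff] using h⟩

@[simp] lemma embm_val {m : ℕ} (g : Fin m) : ((embm m g : Fin (m + 2)) : ℕ) = g := rfl

def pre {m : ℕ} (T : Finset (Fin (m + 2))) : Finset (Fin m) :=
  Finset.univ.filter (fun g => embm m g ∈ T)

lemma mem_pre {m : ℕ} {T : Finset (Fin (m + 2))} {g : Fin m} :
    g ∈ pre T ↔ embm m g ∈ T := by simp [pre]

def gx (m : ℕ) : Fin (m + 2) := ⟨m, Nat.lt_of_lt_of_le (Nat.lt_succ_self m) (Nat.le_succ _)⟩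
def gy (m : ℕ) : Fin (m + 2) := ⟨m + 1, Nat.lt_succ_self (m + 1)⟩

lemma gx_ne_gy {m : ℕ} : gx m ≠ gy m := by
  simp [gx, gy, Fin.ext_iff]

lemma eq_gx_or_gy {m : ℕ} {h : Fin (m + 2)} (hh : ¬ (h : ℕ) < m) :
    h = gx m ∨ h = gy m := by
  have := h.isLt
  rcases Nat.lt_or_ge (h : ℕ) (m + 1) with h1 | h1
  · left; exact Fin.ext (show (h : ℕ) = m by omega)
  · right; exact Fin.ext (show (h : ℕ) = m + 1 by omega)

lemma map_pre {m : ℕ} (T : Finset (Fin (m + 2))) (hT : ∀ h ∈ T, (h : ℕ) < m) :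
    (pre T).map (embm m) = T := by
  ext h
  simp only [Finset.mem_map, mem_pre]
  constructor
  · rintro ⟨g, hg, rfl⟩; exact hg
  · intro hh
    exact ⟨⟨(h : ℕ), hT h hh⟩, hh, Fin.ext rfl⟩

lemma eq_last_of_not_lt {n : ℕ} {j : Fin (n + 1)} (hj : ¬ (j : ℕ) < n) :
    j = Fin.last n := by
  have := j.isLt
  exact Fin.ext (by simp [Fin.val_last]; omega)

section Main

variable {n m : ℕ} {v : Fin n → Fin m → ℝ} {vp : Fin (n + 1) → Fin (m + 2) → ℝ}
variable (hvp : ∀ (i : Fin (n + 1)) (g : Fin (m + 2)),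
      vp i g =
        if hi : (i : ℕ) < n then
          (if hg : (g : ℕ) < m then v ⟨i, hi⟩ ⟨g, hg⟩ else 0)
        else
          (if (g : ℕ) < m then 0 else 1))

include hvp

lemma vp_emb (i : Fin n) (g : Fin m) : vp i.castSucc (embm m g) = v i g := by
  rw [hvp]
  rw [dif_pos (show ((i.castSucc : Fin (n + 1)) : ℕ) < n from i.isLt)]
  rw [dif_pos (show ((embm m g : Fin (m + 2)) : ℕ) < m from g.isLt)]
  rfl

lemma vp_last (g : Fin (m + 2)) :
    vp (Fin.last n) g = if (g : ℕ) < m then 0 else 1 := by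
  rw [hvp, dif_neg (by simp [Fin.val_last])]

lemma vp_zero_orig {i : Fin (n + 1)} (hi : (i : ℕ) < n) {g : Fin (m + 2)}
    (hg : ¬ (g : ℕ) < m) : vp i g = 0 := by
  rw [hvp, dif_pos hi, dif_neg hg]

lemma vp_gx : vp (Fin.last n) (gx m) = 1 := by
  rw [vp_last hvp, if_neg (show ¬ ((gx m : ℕ) < m) from Nat.lt_irrefl m)]

lemma vp_gy : vp (Fin.last n) (gy m) = 1 := by
  rw [vp_last hvp, if_neg (show ¬ ((gy m : ℕ) < m) from Nat.not_lt.mpr (Nat.le_succ m))]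

lemma vp_nonneg (hv : ∀ i g, 0 ≤ v i g) (i : Fin (n + 1)) (g : Fin (m + 2)) :
    0 ≤ vp i g := by
  rw [hvp]; split_ifs <;> first | exact hv _ _ | norm_num

lemma sum_vp_castSucc (i : Fin n) (T : Finset (Fin (m + 2))) :
    ∑ h ∈ T, vp i.castSucc h = ∑ g ∈ pre T, v i g := by
  have h1 : ∑ g ∈ pre T, v i g = ∑ h ∈ (pre T).map (embm m), vp i.castSucc h := by
    rw [Finset.sum_map]
    exact Finset.sum_congr rfl fun g _ => (vp_emb hvp i g).symm
  rw [h1]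
  symm
  apply Finset.sum_subset
  · intro h hh
    rw [Finset.mem_map] at hh
    obtain ⟨g, hg, rfl⟩ := hh
    exact mem_pre.mp hg
  · intro h hh hnot
    apply vp_zero_orig hvp i.isLt
    intro hlt
    exact hnot (by
      rw [Finset.mem_map]
      exact ⟨⟨(h : ℕ), hlt⟩, mem_pre.mpr hh, Fin.ext rfl⟩)

lemma sum_vp_last_le (T : Finset (Fin (m + 2))) :
    ∑ h ∈ T, vp (Fin.last n) h ≤ 2 := by
  have h1 : ∑ h ∈ T, vp (Fin.last n) h
      = ∑ h ∈ T ∩ {gx m, gy m}, vp (Fin.last n) h := by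
    symm
    apply Finset.sum_subset Finset.inter_subset_left
    intro h hh hnot
    rw [vp_last hvp]
    rw [if_pos]
    by_contra hge
    rcases eq_gx_or_gy hge with rfl | rfl <;>
      exact hnot (Finset.mem_inter.mpr ⟨hh, by simp⟩)
  rw [h1]
  calc ∑ h ∈ T ∩ {gx m, gy m}, vp (Fin.last n) h
      ≤ ∑ h ∈ ({gx m, gy m} : Finset (Fin (m + 2))), vp (Fin.last n) h := by
        apply Finset.sum_le_sum_of_subset_of_nonneg Finset.inter_subset_right
        intro h _ _
        rw [vp_last hvp]; split_ifs <;> norm_num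
    _ = 2 := by rw [Finset.sum_pair gx_ne_gy, vp_gx hvp, vp_gy hvp]; norm_num


lemma sum_vp_last_eq_two :
    ∑ h ∈ ({gx m, gy m} : Finset (Fin (m + 2))), vp (Fin.last n) h = 2 := by
  rw [Finset.sum_pair gx_ne_gy, vp_gx hvp, vp_gy hvp]; norm_num

end Main

@[simp] lemma gx_val {m : ℕ} : ((gx m : Fin (m + 2)) : ℕ) = m := rfl
@[simp] lemma gy_val {m : ℕ} : ((gy m : Fin (m + 2)) : ℕ) = m + 1 := rfl

lemma move_complete {N : Type*} [DecidableEq N] {k : ℕ} {A : N → Finset (Fin k)}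
    (hA : IsCompleteAlloc A) {s t : N} (hst : s ≠ t) {g : Fin k} (hg : g ∈ A s) :
    IsCompleteAlloc (fun j =>
      if j = t then insert g (A t) else if j = s then (A s).erase g else A j) := by
  intro h
  by_cases hgh : h = g
  · subst hgh
    refine ⟨t, by simp, ?_⟩
    intro j hj
    simp only at hj
    by_cases hjt : j = t
    · exact hjt
    · rw [if_neg hjt] at hj
      by_cases hjs : j = s
      · rw [if_pos hjs] at hj
        exact absurd (Finset.mem_erase.mp hj).1 (by simp)
      · rw [if_neg hjs] at hj
        exact absurd ((hA h).unique hj hg) hjs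
  · obtain ⟨w, hw, hu⟩ := hA h
    refine ⟨w, ?_, ?_⟩
    · simp only
      by_cases hwt : w = t
      · rw [if_pos hwt]; subst hwt; exact Finset.mem_insert_of_mem hw
      · rw [if_neg hwt]
        by_cases hws : w = s
        · rw [if_pos hws]; subst hws; exact Finset.mem_erase.mpr ⟨hgh, hw⟩
        · rw [if_neg hws]; exact hw
    · intro j hj
      simp only at hj
      apply hu
      by_cases hjt : j = t
      · rw [if_pos hjt] at hj; subst hjt
        exact (Finset.mem_insert.mp hj).resolve_left hgh
      · rw [if_neg hjt] at hj
        by_cases hjs : j = s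
        · rw [if_pos hjs] at hj; subst hjs; exact (Finset.mem_erase.mp hj).2
        · rw [if_neg hjs] at hj; exact hj

lemma move_improves {N : Type*} [DecidableEq N] {k : ℕ} {w : N → Fin k → ℝ}
    {A : N → Finset (Fin k)} (hC : IsCompleteAlloc A) (hPO : IsPO w A)
    {s t : N} (hst : s ≠ t) {g : Fin k} (hg : g ∈ A s)
    (h0 : w s g = 0) (h1 : 0 < w t g) : False := by
  have hgt : g ∉ A t := fun hgt => hst ((hC g).unique hg hgt)
  apply hPO
  refine ⟨_, move_complete hC hst hg, ?_, ⟨t, ?_⟩⟩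
  · intro i
    by_cases hit : i = t
    · subst hit
      show ∑ h ∈ A i, w i h ≤ ∑ h ∈ (if i = i then insert g (A i) else if i = s then (A s).erase g else A i), w i h
      rw [if_pos rfl, Finset.sum_insert hgt]
      linarith
    · by_cases his : i = s
      · subst his
        show ∑ h ∈ A i, w i h ≤ ∑ h ∈ (if i = t then insert g (A t) else if i = i then (A i).erase g else A i), w i h
        rw [if_neg hit, if_pos rfl, Finset.sum_erase _ h0]
      · show ∑ h ∈ A i, w i h ≤ ∑ h ∈ (if i = t then insert g (A t) else if i = s then (A s).erase g else A i), w i h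
        rw [if_neg hit, if_neg his]
  · show ∑ h ∈ A t, w t h < ∑ h ∈ (if t = t then insert g (A t) else if t = s then (A s).erase g else A t), w t h
    rw [if_pos rfl, Finset.sum_insert hgt]
    linarith

def pad {n m : ℕ} (A : Fin n → Finset (Fin m)) : Fin (n + 1) → Finset (Fin (m + 2)) :=
  fun j => if hj : (j : ℕ) < n then (A ⟨j, hj⟩).map (embm m) else {gx m, gy m}

lemma pad_castSucc {n m : ℕ} (A : Fin n → Finset (Fin m)) (i : Fin n) :
    pad A i.castSucc = (A i).map (embm m) := by
  unfold pad
  rw [dif_pos (show ((i.castSucc : Fin (n + 1)) : ℕ) < n from i.isLt)]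
  simp

lemma pad_last {n m : ℕ} (A : Fin n → Finset (Fin m)) :
    pad A (Fin.last n) = {gx m, gy m} := by
  unfold pad
  rw [dif_neg (by simp [Fin.val_last])]

lemma pad_complete {n m : ℕ} {A : Fin n → Finset (Fin m)} (hA : IsCompleteAlloc A) :
    IsCompleteAlloc (pad A) := by
  intro h
  by_cases hlt : (h : ℕ) < m
  · obtain ⟨i, hi, hu⟩ := hA ⟨(h : ℕ), hlt⟩
    have hemb : embm m ⟨(h : ℕ), hlt⟩ = h := Fin.ext rfl
    refine ⟨i.castSucc, ?_, ?_⟩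
    · show h ∈ pad A i.castSucc
      rw [pad_castSucc, ← hemb]
      exact Finset.mem_map_of_mem _ hi
    · intro j hj0
      have hj : h ∈ pad A j := hj0
      by_cases hjn : (j : ℕ) < n
      · have hj' : j = (⟨(j : ℕ), hjn⟩ : Fin n).castSucc := Fin.ext rfl
        rw [hj', pad_castSucc, Finset.mem_map] at hj
        obtain ⟨g, hg, hgh⟩ := hj
        have hgeq : g = ⟨(h : ℕ), hlt⟩ := Fin.ext (by simpa [Fin.ext_iff] using hgh)
        subst hgeq
        rw [hj']
        exact congrArg Fin.castSucc (hu _ hg)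
      · rw [eq_last_of_not_lt hjn, pad_last] at hj
        exfalso
        rcases Finset.mem_insert.mp hj with rfl | hj1
        · simp at hlt
        · rw [Finset.mem_singleton] at hj1; subst hj1; simp at hlt
  · refine ⟨Fin.last n, ?_, ?_⟩
    · show h ∈ pad A (Fin.last n)
      rw [pad_last]
      rcases eq_gx_or_gy hlt with rfl | rfl <;> simp
    · intro j hj0
      have hj : h ∈ pad A j := hj0
      by_cases hjn : (j : ℕ) < n
      · exfalso
        have hj' : j = (⟨(j : ℕ), hjn⟩ : Fin n).castSucc := Fin.ext rfl
        rw [hj', pad_castSucc, Finset.mem_map] at hj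
        obtain ⟨g, _, rfl⟩ := hj
        exact hlt (by simp only [embm_val]; exact g.isLt)
      · exact eq_last_of_not_lt hjn

section Main2

variable {n m : ℕ} {v : Fin n → Fin m → ℝ} {vp : Fin (n + 1) → Fin (m + 2) → ℝ}
variable (hvp : ∀ (i : Fin (n + 1)) (g : Fin (m + 2)),
      vp i g =
        if hi : (i : ℕ) < n then
          (if hg : (g : ℕ) < m then v ⟨i, hi⟩ ⟨g, hg⟩ else 0)
        else
          (if (g : ℕ) < m then 0 else 1))

include hvp

lemma sum_pad (A : Fin n → Finset (Fin m)) (i : Fin n) :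
    ∑ h ∈ pad A i.castSucc, vp i.castSucc h = ∑ g ∈ A i, v i g := by
  rw [pad_castSucc, Finset.sum_map]
  exact Finset.sum_congr rfl fun g _ => vp_emb hvp i g

lemma dget (hpos : ∀ g : Fin m, ∃ i : Fin n, 0 < v i g)
    {Ap : Fin (n + 1) → Finset (Fin (m + 2))}
    (hC : IsCompleteAlloc Ap) (hPO : IsPO vp Ap) :
    Ap (Fin.last n) = {gx m, gy m} := by
  have hget : ∀ z : Fin (m + 2), ¬ ((z : ℕ) < m) → z ∈ Ap (Fin.last n) := by
    intro z hz
    obtain ⟨j, hj, _⟩ := hC z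
    by_cases hjn : (j : ℕ) < n
    · exfalso
      have hne : j ≠ Fin.last n := by
        intro e
        rw [e, Fin.val_last] at hjn
        omega
      have h0 : vp j z = 0 := vp_zero_orig hvp hjn hz
      have h1 : 0 < vp (Fin.last n) z := by
        rw [vp_last hvp, if_neg hz]; norm_num
      exact move_improves hC hPO hne hj h0 h1
    · rwa [eq_last_of_not_lt hjn] at hj
  have hnone : ∀ z ∈ Ap (Fin.last n), ¬ (z : ℕ) < m := by
    intro z hz hlt
    obtain ⟨i, hi⟩ := hpos ⟨(z : ℕ), hlt⟩
    have hne : Fin.last n ≠ i.castSucc := by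
      intro e
      have hval := congrArg Fin.val e
      simp only [Fin.val_last, Fin.coe_castSucc] at hval
      have := i.isLt
      omega
    have h0 : vp (Fin.last n) z = 0 := by rw [vp_last hvp, if_pos hlt]
    have h1 : 0 < vp i.castSucc z := by
      have he : embm m ⟨(z : ℕ), hlt⟩ = z := Fin.ext rfl
      rw [← he, vp_emb hvp]
      exact hi
    exact move_improves hC hPO hne hz h0 h1
  ext z
  simp only [Finset.mem_insert, Finset.mem_singleton]
  constructor
  · intro hz
    exact eq_gx_or_gy (hnone z hz)
  · rintro (rfl | rfl)
    · exact hget _ (by simp)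
    · exact hget _ (by simp)

end Main2

end AddPairAux


open AddPairAux

/-- Adding a new agent `d` and two new goods `x, y` (valued 1 each
by `d` and 0 by everyone else, with `d` valuing all original goods at 0) preserves
the existence of an EFX and Pareto-optimal allocation; moreover, in any EFX and PO
allocation of the padded instance agent `d` receives exactly `{x, y}`. -/
theorem add_private_pair_EFX_PO_iff
    (n m : ℕ) (v : Fin n → Fin m → ℝ) (hv : ∀ i g, 0 ≤ v i g)
    (hpos : ∀ g : Fin m, ∃ i : Fin n, 0 < v i g)
    (vp : Fin (n + 1) → Fin (m + 2) → ℝ)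
    (hvp : ∀ (i : Fin (n + 1)) (g : Fin (m + 2)),
      vp i g =
        if hi : (i : ℕ) < n then
          (if hg : (g : ℕ) < m then v ⟨i, hi⟩ ⟨g, hg⟩ else 0)
        else
          (if (g : ℕ) < m then 0 else 1)) :
    ((∃ A : Fin n → Finset (Fin m), IsCompleteAlloc A ∧ IsEFX v A ∧ IsPO v A) ↔
     (∃ Ap : Fin (n + 1) → Finset (Fin (m + 2)),
        IsCompleteAlloc Ap ∧ IsEFX vp Ap ∧ IsPO vp Ap)) ∧
    (∀ Ap : Fin (n + 1) → Finset (Fin (m + 2)),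
      IsCompleteAlloc Ap → IsEFX vp Ap → IsPO vp Ap →
        Ap (Fin.last n) = {⟨m, by omega⟩, ⟨m + 1, by omega⟩}) := by
  classical
  refine ⟨⟨?_, ?_⟩, fun Ap hC _ hPO => dget hvp hpos hC hPO⟩
  · -- forward
    rintro ⟨A, hAC, hAE, hAP⟩
    refine ⟨pad A, pad_complete hAC, ?_, ?_⟩
    · -- EFX
      intro i j hne g hg hpos'
      by_cases hij : i = j
      · subst hij
        exact Finset.sum_le_sum_of_subset_of_nonneg (Finset.erase_subset _ _)
          (fun h _ _ => vp_nonneg hvp hv i h)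
      by_cases hjn : (j : ℕ) < n
      · have hj' : j = (⟨(j : ℕ), hjn⟩ : Fin n).castSucc := Fin.ext rfl
        by_cases hin : (i : ℕ) < n
        · have hi' : i = (⟨(i : ℕ), hin⟩ : Fin n).castSucc := Fin.ext rfl
          rw [hj', pad_castSucc, Finset.mem_map] at hg
          obtain ⟨g', hg', rfl⟩ := hg
          rw [hi', vp_emb hvp] at hpos'
          rw [hi', hj', pad_castSucc, pad_castSucc, ← Finset.map_erase,
            Finset.sum_map, Finset.sum_map]
          calc ∑ h ∈ (A ⟨(j : ℕ), hjn⟩).erase g',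
                  vp (⟨(i : ℕ), hin⟩ : Fin n).castSucc (embm m h)
              = ∑ h ∈ (A ⟨(j : ℕ), hjn⟩).erase g', v ⟨(i : ℕ), hin⟩ h :=
                Finset.sum_congr rfl fun h _ => vp_emb hvp _ h
            _ ≤ ∑ h ∈ A ⟨(i : ℕ), hin⟩, v ⟨(i : ℕ), hin⟩ h :=
                hAE _ _ (Finset.ne_empty_of_mem hg') g' hg' hpos'
            _ = ∑ h ∈ A ⟨(i : ℕ), hin⟩,
                  vp (⟨(i : ℕ), hin⟩ : Fin n).castSucc (embm m h) :=
                Finset.sum_congr rfl fun h _ => (vp_emb hvp _ h).symm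
        · exfalso
          rw [hj', pad_castSucc, Finset.mem_map] at hg
          obtain ⟨g', _, rfl⟩ := hg
          rw [eq_last_of_not_lt hin, vp_last hvp,
            if_pos (show ((embm m g' : Fin (m + 2)) : ℕ) < m from g'.isLt)] at hpos'
          exact absurd hpos' (lt_irrefl 0)
      · exfalso
        rw [eq_last_of_not_lt hjn, pad_last] at hg
        have hin : (i : ℕ) < n := by
          by_contra hin
          exact hij (by rw [eq_last_of_not_lt hin, eq_last_of_not_lt hjn])
        have h0 : vp i g = 0 := by
          refine vp_zero_orig hvp hin ?_
          rcases Finset.mem_insert.mp hg with rfl | hg1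
          · simp
          · rw [Finset.mem_singleton] at hg1; subst hg1; simp
        rw [h0] at hpos'
        exact absurd hpos' (lt_irrefl 0)
    · -- PO
      rintro ⟨B, hBC, hBle, i₀, hi₀⟩
      have hi₀n : (i₀ : ℕ) < n := by
        by_contra hn
        rw [eq_last_of_not_lt hn, pad_last, sum_vp_last_eq_two hvp] at hi₀
        exact absurd (lt_of_lt_of_le hi₀ (sum_vp_last_le hvp _)) (lt_irrefl 2)
      have hcs : (⟨(i₀ : ℕ), hi₀n⟩ : Fin n).castSucc = i₀ := Fin.ext rfl
      apply hAP
      refine ⟨fun i => pre (B i.castSucc) ∪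
        (if i = (⟨(i₀ : ℕ), hi₀n⟩ : Fin n) then pre (B (Fin.last n)) else ∅),
        ?_, ?_, ?_⟩
      · intro g
        obtain ⟨j, hj, hu⟩ := hBC (embm m g)
        have memB' : ∀ i : Fin n,
            g ∈ pre (B i.castSucc) ∪
              (if i = (⟨(i₀ : ℕ), hi₀n⟩ : Fin n) then pre (B (Fin.last n)) else ∅)
            ↔ (embm m g ∈ B i.castSucc ∨
               (i = (⟨(i₀ : ℕ), hi₀n⟩ : Fin n) ∧ embm m g ∈ B (Fin.last n))) := by
          intro i
          rw [Finset.mem_union, mem_pre]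
          constructor
          · rintro (h | h)
            · exact Or.inl h
            · split_ifs at h with hii
              · exact Or.inr ⟨hii, mem_pre.mp h⟩
              · exact absurd h (Finset.notMem_empty g)
          · rintro (h | ⟨rfl, h⟩)
            · exact Or.inl h
            · exact Or.inr (by rw [if_pos rfl]; exact mem_pre.mpr h)
        by_cases hjn : (j : ℕ) < n
        · refine ⟨⟨(j : ℕ), hjn⟩, ?_, ?_⟩
          · exact (memB' _).mpr (Or.inl (by
              rw [show (⟨(j : ℕ), hjn⟩ : Fin n).castSucc = j from Fin.ext rfl]
              exact hj))
          · intro i₁ hi₁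
            rcases (memB' i₁).mp hi₁ with h | ⟨rfl, h⟩
            · have he := hu _ h
              have hval := congrArg Fin.val he
              rw [Fin.coe_castSucc] at hval
              exact Fin.ext hval
            · exfalso
              have he := hu _ h
              have hval := congrArg Fin.val he
              rw [Fin.val_last] at hval
              omega
        · rw [eq_last_of_not_lt hjn] at hj hu
          refine ⟨⟨(i₀ : ℕ), hi₀n⟩, ?_, ?_⟩
          · exact (memB' _).mpr (Or.inr ⟨rfl, hj⟩)
          · intro i₁ hi₁
            rcases (memB' i₁).mp hi₁ with h | ⟨rfl, h⟩
            · exfalso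
              have he := hu _ h
              have hval := congrArg Fin.val he
              rw [Fin.coe_castSucc, Fin.val_last] at hval
              have := i₁.isLt
              omega
            · rfl
      · intro i
        calc ∑ h ∈ A i, v i h
            = ∑ h ∈ pad A i.castSucc, vp i.castSucc h := (sum_pad hvp A i).symm
          _ ≤ ∑ h ∈ B i.castSucc, vp i.castSucc h := hBle i.castSucc
          _ = ∑ g ∈ pre (B i.castSucc), v i g := sum_vp_castSucc hvp i _
          _ ≤ _ := Finset.sum_le_sum_of_subset_of_nonneg
              Finset.subset_union_left (fun h _ _ => hv i h)
      · refine ⟨⟨(i₀ : ℕ), hi₀n⟩, ?_⟩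
        calc ∑ h ∈ A ⟨(i₀ : ℕ), hi₀n⟩, v ⟨(i₀ : ℕ), hi₀n⟩ h
            = ∑ h ∈ pad A (⟨(i₀ : ℕ), hi₀n⟩ : Fin n).castSucc,
                vp (⟨(i₀ : ℕ), hi₀n⟩ : Fin n).castSucc h := (sum_pad hvp A _).symm
          _ < ∑ h ∈ B (⟨(i₀ : ℕ), hi₀n⟩ : Fin n).castSucc,
                vp (⟨(i₀ : ℕ), hi₀n⟩ : Fin n).castSucc h := by rw [hcs]; exact hi₀
          _ = ∑ g ∈ pre (B (⟨(i₀ : ℕ), hi₀n⟩ : Fin n).castSucc), v ⟨(i₀ : ℕ), hi₀n⟩ g :=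
              sum_vp_castSucc hvp _ _
          _ ≤ _ := Finset.sum_le_sum_of_subset_of_nonneg
              Finset.subset_union_left (fun h _ _ => hv _ h)
  · -- backward
    rintro ⟨Ap, hC, hE, hP⟩
    have hd : Ap (Fin.last n) = {gx m, gy m} := dget hvp hpos hC hP
    have horig : ∀ i : Fin n, ∀ h ∈ Ap i.castSucc, (h : ℕ) < m := by
      intro i h hh
      by_contra hge
      have hmem : h ∈ Ap (Fin.last n) := by
        rw [hd]; rcases eq_gx_or_gy hge with rfl | rfl <;> simp
      have he := (hC h).unique hh hmem
      have hval := congrArg Fin.val he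
      simp only [Fin.coe_castSucc, Fin.val_last] at hval
      have := i.isLt
      omega
    have hmap : ∀ i : Fin n, (pre (Ap i.castSucc)).map (embm m) = Ap i.castSucc :=
      fun i => map_pre _ (horig i)
    refine ⟨fun i => pre (Ap i.castSucc), ?_, ?_, ?_⟩
    · intro g
      obtain ⟨j, hj, hu⟩ := hC (embm m g)
      have hjn : (j : ℕ) < n := by
        by_contra hjn
        rw [eq_last_of_not_lt hjn, hd] at hj
        have hglt := g.isLt
        rcases Finset.mem_insert.mp hj with h1 | h1
        · have := congrArg Fin.val h1; simp only [embm_val, gx_val] at this; omega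
        · rw [Finset.mem_singleton] at h1
          have := congrArg Fin.val h1; simp only [embm_val, gy_val] at this; omega
      refine ⟨⟨(j : ℕ), hjn⟩, ?_, ?_⟩
      · exact mem_pre.mpr (by
          rw [show (⟨(j : ℕ), hjn⟩ : Fin n).castSucc = j from Fin.ext rfl]
          exact hj)
      · intro i₁ hi₁
        have he := hu _ (mem_pre.mp hi₁)
        have hval := congrArg Fin.val he
        rw [Fin.coe_castSucc] at hval
        exact Fin.ext hval
    · intro i j hne g hg hp'
      have hgj : embm m g ∈ Ap j.castSucc := mem_pre.mp hg
      have hvpos : 0 < vp i.castSucc (embm m g) := by rw [vp_emb hvp]; exact hp'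
      have key := hE i.castSucc j.castSucc (Finset.ne_empty_of_mem hgj) (embm m g) hgj hvpos
      rw [← hmap i, ← hmap j, ← Finset.map_erase, Finset.sum_map, Finset.sum_map] at key
      calc ∑ h ∈ (pre (Ap j.castSucc)).erase g, v i h
          = ∑ h ∈ (pre (Ap j.castSucc)).erase g, vp i.castSucc (embm m h) :=
            Finset.sum_congr rfl fun h _ => (vp_emb hvp i h).symm
        _ ≤ ∑ h ∈ pre (Ap i.castSucc), vp i.castSucc (embm m h) := key
        _ = ∑ h ∈ pre (Ap i.castSucc), v i h :=
            Finset.sum_congr rfl fun h _ => vp_emb hvp i h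
    · rintro ⟨B, hBC, hBle, i₀, hi₀⟩
      apply hP
      refine ⟨pad B, pad_complete hBC, ?_, ⟨i₀.castSucc, ?_⟩⟩
      · intro j
        by_cases hjn : (j : ℕ) < n
        · have hj' : j = (⟨(j : ℕ), hjn⟩ : Fin n).castSucc := Fin.ext rfl
          rw [hj']
          calc ∑ h ∈ Ap (⟨(j : ℕ), hjn⟩ : Fin n).castSucc,
                vp (⟨(j : ℕ), hjn⟩ : Fin n).castSucc h
              = ∑ g ∈ pre (Ap (⟨(j : ℕ), hjn⟩ : Fin n).castSucc), v ⟨(j : ℕ), hjn⟩ g :=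
                sum_vp_castSucc hvp _ _
            _ ≤ ∑ g ∈ B ⟨(j : ℕ), hjn⟩, v ⟨(j : ℕ), hjn⟩ g := hBle _
            _ = ∑ h ∈ pad B (⟨(j : ℕ), hjn⟩ : Fin n).castSucc,
                vp (⟨(j : ℕ), hjn⟩ : Fin n).castSucc h := (sum_pad hvp B _).symm
        · rw [eq_last_of_not_lt hjn, hd, pad_last]
      · calc ∑ h ∈ Ap i₀.castSucc, vp i₀.castSucc h
            = ∑ g ∈ pre (Ap i₀.castSucc), v i₀ g := sum_vp_castSucc hvp _ _
          _ < ∑ g ∈ B i₀, v i₀ g := hi₀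
          _ = ∑ h ∈ pad B i₀.castSucc, vp i₀.castSucc h := (sum_pad hvp B _).symm
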